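/- In the setting of the coordinate-wise projection bound: let d be concave, differentiable with L-Lipschitz gradient, D the dual feasible set (first m coordinates ≥ 0), u ∈ D, d⋆ = sup_D d. Then −⟨∇d(u), u⟩ ≤ 2(d⋆ − d(u)) + ‖u‖_∞ √(2L·q·(d⋆ − d(u))), where q = m + p is the dimension. -/

import Mathlib

open scoped RealInnerProductSpace

/-- For concave `d` with `L`-Lipschitz gradient and dual feasible set `D`
(first `m` coordinates nonnegative) in dimension `q = m + p`, for `u ∈ D`:
`−⟪∇d(u), u⟫ ≤ 2(d⋆ − d(u)) + ‖u‖_∞ √(2·L·q·(d⋆ − d(u)))`. -/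
lemma descent_aux {F : Type*} [NormedAddCommGroup F] [InnerProductSpace ℝ F] [CompleteSpace F]
    (d : F → ℝ) (d' : F → F) (L : ℝ)
    (hgrad : ∀ u, HasGradientAt d (d' u) u)
    (hlip : ∀ u v, ‖d' u - d' v‖ ≤ L * ‖u - v‖)
    (u v : F) :
    d u + ⟪d' u, v⟫ - L / 2 * ‖v‖ ^ 2 ≤ d (u + v) := by
  set ψ : ℝ → ℝ := fun t => d (u + t • v) - t * ⟪d' u, v⟫ + L / 2 * t ^ 2 * ‖v‖ ^ 2 with hψdef
  have hψ : ∀ t : ℝ, HasDerivAt ψ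
      (⟪d' (u + t • v), v⟫ - ⟪d' u, v⟫ + L / 2 * (2 * t) * ‖v‖ ^ 2) t := by
    intro t
    have hc : HasDerivAt (fun t : ℝ => u + t • v) v t := by
      simpa using ((hasDerivAt_id t).smul_const v).const_add u
    have h1 : HasDerivAt (fun t : ℝ => d (u + t • v)) ⟪d' (u + t • v), v⟫ t := by
      have := (hgrad (u + t • v)).hasFDerivAt.comp_hasDerivAt t hc
      simp at this; exact this
    have h2 : HasDerivAt (fun t : ℝ => t * ⟪d' u, v⟫) ⟪d' u, v⟫ t := by
      simpa using (hasDerivAt_id t).mul_const ⟪d' u, v⟫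
    have h3 : HasDerivAt (fun t : ℝ => L / 2 * t ^ 2 * ‖v‖ ^ 2) (L / 2 * (2 * t) * ‖v‖ ^ 2) t := by
      have := ((hasDerivAt_pow 2 t).const_mul (L / 2)).mul_const (‖v‖ ^ 2)
      simpa [mul_comm, mul_assoc, mul_left_comm] using this
    exact (h1.sub h2).add h3
  have hmono : MonotoneOn ψ (Set.Icc (0:ℝ) 1) := by
    apply monotoneOn_of_deriv_nonneg (convex_Icc (0:ℝ) 1)
    · exact fun t _ => ((hψ t).continuousAt).continuousWithinAt
    · intro t ht
      exact ((hψ t).differentiableAt).differentiableWithinAt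
    · intro t ht
      rw [interior_Icc] at ht
      rw [(hψ t).deriv]
      have ht0 : (0:ℝ) ≤ t := le_of_lt ht.1
      have hcs : ⟪d' u - d' (u + t • v), v⟫ ≤ ‖d' u - d' (u + t • v)‖ * ‖v‖ :=
        real_inner_le_norm _ _
      have hl : ‖d' u - d' (u + t • v)‖ ≤ L * (t * ‖v‖) := by
        have := hlip u (u + t • v)
        simpa [norm_smul, abs_of_nonneg ht0] using this
      have : ⟪d' u, v⟫ - ⟪d' (u + t • v), v⟫ ≤ L * t * ‖v‖ ^ 2 := by
        have h := hcs.trans (mul_le_mul_of_nonneg_right hl (norm_nonneg v))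
        rw [inner_sub_left] at h
        nlinarith [norm_nonneg v]
      nlinarith
  have h01 := hmono (Set.mem_Icc.2 ⟨le_refl 0, zero_le_one⟩)
    (Set.mem_Icc.2 ⟨zero_le_one, le_refl 1⟩) zero_le_one
  simp only [hψdef] at h01
  norm_num at h01
  linarith

theorem neg_grad_inner_bound {m p : ℕ}
    (d : EuclideanSpace ℝ (Fin (m + p)) → ℝ)
    (d' : EuclideanSpace ℝ (Fin (m + p)) → EuclideanSpace ℝ (Fin (m + p)))
    (L : ℝ) (hL : 0 < L)
    (hconc : ConcaveOn ℝ Set.univ d)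
    (hgrad : ∀ u, HasGradientAt d (d' u) u)
    (hlip : ∀ u v, ‖d' u - d' v‖ ≤ L * ‖u - v‖)
    (D : Set (EuclideanSpace ℝ (Fin (m + p))))
    (hD : D = {u | ∀ i : Fin (m + p), (i : ℕ) < m → 0 ≤ u i})
    (hbdd : BddAbove (d '' D))
    (u : EuclideanSpace ℝ (Fin (m + p))) (hu : u ∈ D) :
    -⟪d' u, u⟫ ≤ 2 * (sSup (d '' D) - d u)
      + (⨆ i : Fin (m + p), |u i|) *
        Real.sqrt (2 * L * (m + p) * (sSup (d '' D) - d u)) := by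
  set g := d' u with hg
  set Δ := sSup (d '' D) - d u with hΔdef
  set M := ⨆ i : Fin (m + p), |u i| with hMdef
  have hΔ0 : 0 ≤ Δ := by
    have : d u ≤ sSup (d '' D) := le_csSup hbdd ⟨u, hu, rfl⟩
    linarith
  -- the projected point
  set w : EuclideanSpace ℝ (Fin (m + p)) :=
    WithLp.toLp 2 (fun i => if u i + g i / L < 0 ∧ (i : ℕ) < m then 0 else u i + g i / L) with hwdef
  have hwD : w ∈ D := by
    rw [hD]
    intro i hi
    by_cases h : u i + g i / L < 0 ∧ (i : ℕ) < m
    · simp [hwdef, h]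
    · have : ¬ u i + g i / L < 0 := fun hc => h ⟨hc, hi⟩
      simp only [hwdef, PiLp.toLp_apply, if_neg h]
      linarith [not_lt.1 this]
  have hdw : d w ≤ sSup (d '' D) := le_csSup hbdd ⟨w, hwD, rfl⟩
  have hkey : ⟪g, w - u⟫ - L / 2 * ‖w - u‖ ^ 2 ≤ Δ := by
    have := descent_aux d d' L hgrad hlip u (w - u)
    rw [add_sub_cancel] at this
    rw [hΔdef]
    linarith
  -- coordinate expansion
  have hinner : ⟪g, w - u⟫ = ∑ i, g i * (w i - u i) := by
    simp [PiLp.inner_apply, RCLike.inner_apply, PiLp.sub_apply, mul_comm]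
  have hnorm : ‖w - u‖ ^ 2 = ∑ i, (w i - u i) ^ 2 := by
    rw [← real_inner_self_eq_norm_sq]
    simp only [PiLp.inner_apply, RCLike.inner_apply, PiLp.sub_apply, conj_trivial, sq]
  set A : Finset (Fin (m + p)) :=
    Finset.univ.filter (fun i => u i + g i / L < 0 ∧ (i : ℕ) < m) with hAdef
  have hsplit : ∀ (f : Fin (m + p) → ℝ),
      ∑ i, f i = ∑ i ∈ A, f i + ∑ i ∈ Finset.univ.filter
        (fun i => ¬(u i + g i / L < 0 ∧ (i : ℕ) < m)), f i := by
    intro f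
    rw [hAdef, Finset.sum_filter_add_sum_filter_not]
  set I : Finset (Fin (m + p)) :=
    Finset.univ.filter (fun i => ¬(u i + g i / L < 0 ∧ (i : ℕ) < m)) with hIdef
  -- per coordinate values
  have hwA : ∀ i ∈ A, w i - u i = -u i := by
    intro i hi
    rw [hAdef, Finset.mem_filter] at hi
    simp [hwdef, hi.2]
  have hwI : ∀ i ∈ I, w i - u i = g i / L := by
    intro i hi
    rw [hIdef, Finset.mem_filter] at hi
    simp [hwdef, hi.2]
  have huA : ∀ i ∈ A, 0 ≤ u i ∧ g i < -(L * u i) := by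
    intro i hi
    rw [hAdef, Finset.mem_filter] at hi
    have hui : 0 ≤ u i := by rw [hD] at hu; exact hu i hi.2.2
    constructor
    · exact hui
    · have := hi.2.1
      have := (div_lt_iff₀ hL).1 (by linarith : g i / L < -u i)
      linarith [this]
  set SA := ∑ i ∈ A, (-(g i * u i)) with hSAdef
  set SI := ∑ i ∈ I, (g i) ^ 2 with hSIdef
  have hmain : SA / 2 + SI / (2 * L) ≤ Δ := by
    have e1 : ⟪g, w - u⟫ - L / 2 * ‖w - u‖ ^ 2
        = ∑ i ∈ A, (g i * (w i - u i) - L / 2 * (w i - u i) ^ 2)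
          + ∑ i ∈ I, (g i * (w i - u i) - L / 2 * (w i - u i) ^ 2) := by
      rw [hinner, hnorm, Finset.mul_sum, ← Finset.sum_sub_distrib]
      exact hsplit _
    have e2 : ∑ i ∈ A, (-(g i * u i)) / 2
        ≤ ∑ i ∈ A, (g i * (w i - u i) - L / 2 * (w i - u i) ^ 2) := by
      apply Finset.sum_le_sum
      intro i hi
      rw [hwA i hi]
      obtain ⟨h1, h2⟩ := huA i hi
      nlinarith
    have e3 : ∑ i ∈ I, (g i * (w i - u i) - L / 2 * (w i - u i) ^ 2)
        = ∑ i ∈ I, (g i) ^ 2 / (2 * L) := by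
      apply Finset.sum_congr rfl
      intro i hi
      rw [hwI i hi]
      field_simp
      ring
    have hk := hkey
    rw [e1, e3] at hk
    have eA : SA / 2 = ∑ i ∈ A, (-(g i * u i)) / 2 := by rw [hSAdef, Finset.sum_div]
    have eI : SI / (2 * L) = ∑ i ∈ I, (g i) ^ 2 / (2 * L) := by rw [hSIdef, Finset.sum_div]
    rw [eA, eI]
    linarith
  have hSA0 : 0 ≤ SA := by
    apply Finset.sum_nonneg
    intro i hi
    obtain ⟨h1, h2⟩ := huA i hi
    nlinarith [mul_le_mul_of_nonneg_right h2.le h1, mul_nonneg (mul_nonneg hL.le h1) h1]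
  have hSI0 : 0 ≤ SI := Finset.sum_nonneg fun i _ => sq_nonneg _
  have hSA : SA ≤ 2 * Δ := by
    have : SI / (2 * L) ≥ 0 := by positivity
    linarith
  have hSI : SI ≤ 2 * L * Δ := by
    have h1 : 0 ≤ SA / 2 := by linarith
    have h2 : SI / (2 * L) ≤ Δ := by linarith
    calc SI = 2 * L * (SI / (2 * L)) := by field_simp
    _ ≤ 2 * L * Δ := by
        apply mul_le_mul_of_nonneg_left h2; positivity
  -- bound on sup
  have hM0 : 0 ≤ M := by
    rcases isEmpty_or_nonempty (Fin (m + p)) with he | hne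
    · haveI := he
      rw [hMdef, iSup_of_empty']
      simp [Real.sSup_empty]
    · obtain ⟨i⟩ := hne
      rw [hMdef]
      exact le_trans (abs_nonneg (u i))
        (le_ciSup (Set.Finite.bddAbove (Set.finite_range fun j => |u j|)) i)
  have hMi : ∀ i : Fin (m + p), |u i| ≤ M := by
    intro i
    rw [hMdef]
    exact le_ciSup (Set.Finite.bddAbove (Set.finite_range fun j => |u j|)) i
  -- final assembly
  have hfinal : -⟪g, u⟫ = SA + ∑ i ∈ I, (-(g i * u i)) := by
    have e : ⟪g, u⟫ = ∑ i, g i * u i := by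
      simp [PiLp.inner_apply, RCLike.inner_apply, mul_comm]
    rw [e, ← Finset.sum_neg_distrib]
    exact hsplit _
  have hIsum : ∑ i ∈ I, (-(g i * u i)) ≤ M * Real.sqrt (((m:ℝ) + p) * SI) := by
    calc ∑ i ∈ I, (-(g i * u i)) ≤ ∑ i ∈ I, M * |g i| := by
          apply Finset.sum_le_sum
          intro i _
          calc -(g i * u i) ≤ |g i * u i| := neg_le_abs _
          _ = |g i| * |u i| := abs_mul _ _
          _ ≤ |g i| * M := mul_le_mul_of_nonneg_left (hMi i) (abs_nonneg _)
          _ = M * |g i| := mul_comm _ _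
    _ = M * ∑ i ∈ I, |g i| := by rw [Finset.mul_sum]
    _ ≤ M * Real.sqrt (((m:ℝ) + p) * SI) := by
        apply mul_le_mul_of_nonneg_left _ hM0
        have h0 : (0:ℝ) ≤ ∑ i ∈ I, |g i| := Finset.sum_nonneg fun i _ => abs_nonneg _
        have hc := sq_sum_le_card_mul_sum_sq (s := I) (f := fun i => |g i|)
        have hcard : (I.card : ℝ) ≤ (m:ℝ) + p := by
          have := Finset.card_le_univ I
          have h2 : (Fintype.card (Fin (m + p)) : ℝ) = (m:ℝ) + p := by push_cast [Fintype.card_fin]; ring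
          calc (I.card : ℝ) ≤ (Fintype.card (Fin (m + p)) : ℝ) := by exact_mod_cast this
          _ = (m:ℝ) + p := h2
        have habs : ∑ i ∈ I, |g i| ^ 2 = SI := by
          rw [hSIdef]; exact Finset.sum_congr rfl fun i _ => sq_abs _
        have hkey2 : (∑ i ∈ I, |g i|) ^ 2 ≤ ((m:ℝ) + p) * SI := by
          calc (∑ i ∈ I, |g i|) ^ 2 ≤ (I.card : ℝ) * ∑ i ∈ I, |g i| ^ 2 := hc
          _ = (I.card : ℝ) * SI := by rw [habs]
          _ ≤ ((m:ℝ) + p) * SI := mul_le_mul_of_nonneg_right hcard hSI0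
        rw [Real.le_sqrt h0]
        · exact hkey2
        · exact mul_nonneg (by positivity) hSI0
  have hsqrt : Real.sqrt (((m:ℝ) + p) * SI) ≤ Real.sqrt (2 * L * ((m:ℝ) + p) * Δ) := by
    apply Real.sqrt_le_sqrt
    calc ((m:ℝ) + p) * SI ≤ ((m:ℝ) + p) * (2 * L * Δ) :=
          mul_le_mul_of_nonneg_left hSI (by positivity)
    _ = 2 * L * ((m:ℝ) + p) * Δ := by ring
  have hlast : M * Real.sqrt (((m:ℝ) + p) * SI) ≤ M * Real.sqrt (2 * L * ((m:ℝ) + p) * Δ) :=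
    mul_le_mul_of_nonneg_left hsqrt hM0
  calc -⟪g, u⟫ = SA + ∑ i ∈ I, (-(g i * u i)) := hfinal
  _ ≤ 2 * Δ + M * Real.sqrt (((m:ℝ) + p) * SI) := by linarith
  _ ≤ 2 * Δ + M * Real.sqrt (2 * L * ((m:ℝ) + p) * Δ) := by linarith
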